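/- For every vertex v of a k-uniform hypergraph H with maximum degree at most d, the probability that a uniformly random matching of H leaves v uncovered is at least 1/(d+1). -/

import Mathlib

open Finset
open scoped Classical

variable {V : Type*}

/-- Degree of a vertex: number of edges containing it. -/
noncomputable def degree (E : Finset (Finset V)) (v : V) : ℕ :=
  (E.filter (fun e => v ∈ e)).card

/-- `E` is `k`-uniform. -/
def Uniform (E : Finset (Finset V)) (k : ℕ) : Prop := ∀ e ∈ E, e.card = k

/-- `E` is linear: two distinct edges share at most one vertex. -/
noncomputable def Linear (E : Finset (Finset V)) : Prop :=
  ∀ e ∈ E, ∀ f ∈ E, e ≠ f → (e ∩ f).card ≤ 1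

/-- The set of matchings of `E`: subsets of pairwise disjoint edges. -/
noncomputable def matchings (E : Finset (Finset V)) : Finset (Finset (Finset V)) :=
  E.powerset.filter (fun M => ∀ e ∈ M, ∀ f ∈ M, e ≠ f → Disjoint e f)

/-- Probability that a uniformly random matching of `E` leaves `v` uncovered. -/
noncomputable def uncovProb (E : Finset (Finset V)) (v : V) : ℝ :=
  (((matchings E).filter (fun M => ∀ e ∈ M, v ∉ e)).card : ℝ) / ((matchings E).card : ℝ)

/-- If every vertex of a `k`-uniform hypergraph has degree at most `d`, then a
uniformly random matching leaves any vertex uncovered with probability at least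
`1/(d+1)`. -/
theorem uncovProb_lower_bound (V : Type) (k d : ℕ) (E : Finset (Finset V))
    (hU : Uniform E k) (hdeg : ∀ w : V, degree E w ≤ d) (v : V) :
    1 / ((d : ℝ) + 1) ≤ uncovProb E v := by
  classical
  set Ms := matchings E with hMs
  set A := Ms.filter (fun M => ∀ e ∈ M, v ∉ e) with hA
  set C := Ms.filter (fun M => ¬ ∀ e ∈ M, v ∉ e) with hC
  have hmem : ∀ M : Finset (Finset V), M ∈ Ms ↔
      M ⊆ E ∧ ∀ e ∈ M, ∀ f ∈ M, e ≠ f → Disjoint e f := by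
    intro M; simp [hMs, matchings, Finset.mem_filter, Finset.mem_powerset]
  have hsplit : A.card + C.card = Ms.card :=
    Finset.card_filter_add_card_filter_not _
  have hemptyM : (∅ : Finset (Finset V)) ∈ Ms := by
    rw [hmem]; simp
  have hempty : (∅ : Finset (Finset V)) ∈ A := by
    rw [hA, Finset.mem_filter]; exact ⟨hemptyM, by simp⟩
  have hApos : 0 < A.card := Finset.card_pos.2 ⟨∅, hempty⟩
  have hTpos : 0 < Ms.card := Finset.card_pos.2 ⟨∅, hemptyM⟩
  have hCle : C.card ≤ d * A.card := by
    have h1 : C.card ≤ ((E.filter (fun e => v ∈ e)) ×ˢ A).card := by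
      apply Finset.card_le_card_of_injOn
        (fun M => if h : ∃ e ∈ M, v ∈ e then (h.choose, M.erase h.choose) else (∅, ∅))
      · intro M hM
        rw [hC, Finset.mem_coe, Finset.mem_filter] at hM
        obtain ⟨hMmat, hMcov⟩ := hM
        push_neg at hMcov
        obtain ⟨e, he, hve⟩ := hMcov
        have hex : ∃ e ∈ M, v ∈ e := ⟨e, he, hve⟩
        obtain ⟨hce, hcv⟩ := hex.choose_spec
        rw [hmem] at hMmat
        obtain ⟨hsub, hdisj⟩ := hMmat
        simp only [dif_pos hex, Finset.mem_coe, Finset.mem_product]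
        constructor
        · exact Finset.mem_filter.2 ⟨hsub hce, hcv⟩
        · rw [hA, Finset.mem_filter]
          constructor
          · rw [hmem]
            exact ⟨(Finset.erase_subset _ _).trans hsub,
              fun a ha b hb hab => hdisj a (Finset.mem_of_mem_erase ha)
                b (Finset.mem_of_mem_erase hb) hab⟩
          · intro f hf hvf
            have hfM := Finset.mem_of_mem_erase hf
            have hne : f ≠ hex.choose := Finset.ne_of_mem_erase hf
            exact Finset.disjoint_left.1 (hdisj f hfM hex.choose hce hne) hvf hcv
      · intro M₁ h1 M₂ h2 heq
        simp only [Finset.mem_coe] at h1 h2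
        rw [hC, Finset.mem_filter] at h1 h2
        have hex₁ : ∃ e ∈ M₁, v ∈ e := by
          have := h1.2; push_neg at this; exact this
        have hex₂ : ∃ e ∈ M₂, v ∈ e := by
          have := h2.2; push_neg at this; exact this
        simp only [dif_pos hex₁, dif_pos hex₂, Prod.mk.injEq] at heq
        obtain ⟨he, hM⟩ := heq
        have h₁ := Finset.insert_erase hex₁.choose_spec.1
        have h₂ := Finset.insert_erase hex₂.choose_spec.1
        rw [he] at hM
        rw [← h₁, ← h₂, he, hM]
    have h2 : ((E.filter (fun e => v ∈ e)) ×ˢ A).card ≤ d * A.card := by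
      rw [Finset.card_product]
      exact Nat.mul_le_mul_right _ (hdeg v)
    exact h1.trans h2
  have hTle : (Ms.card : ℝ) ≤ ((d : ℝ) + 1) * A.card := by
    have : Ms.card ≤ (d + 1) * A.card := by
      rw [← hsplit]; nlinarith [hCle]
    calc (Ms.card : ℝ) ≤ ((d + 1) * A.card : ℕ) := by exact_mod_cast this
      _ = ((d : ℝ) + 1) * A.card := by push_cast; ring
  rw [uncovProb]
  rw [div_le_div_iff₀ (by positivity) (by exact_mod_cast hTpos)]
  calc (1 : ℝ) * Ms.card = Ms.card := one_mul _
    _ ≤ ((d : ℝ) + 1) * A.card := hTle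
    _ = (A.card : ℝ) * ((d : ℝ) + 1) := mul_comm _ _
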